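/- Let n ≥ 1 and let Φ_B = {±e_i : 1 ≤ i ≤ n} ∪ {±e_j ± e_k : 1 ≤ j < k ≤ n} (all four sign combinations) be the set of roots of type B_n in ℝ^n, with dual lattice M = ℤ^n. Let P ⊆ ℝ^n be a lattice polytope cut out by Φ_B: that is, P is the convex hull of a nonempty finite subset of M, and there exist a finite subset S ⊆ Φ_B and real numbers c_v (v ∈ S) with P = {x ∈ ℝ^n : ⟨x, v⟩ ≥ c_v for all v ∈ S}. Then P is normal: for every positive integer m, every point of M lying in the dilate m·P is a sum of m points of M ∩ P. -/
import Mathlib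


open Finset Pointwise

/-- The `i`-th standard basis vector of `ℝ^n`. -/
noncomputable def stdBasis (n : ℕ) (i : Fin n) : Fin n → ℝ := fun j => if j = i then 1 else 0

/-- The standard inner product on `ℝ^n`. -/
noncomputable def innerProd {n : ℕ} (u v : Fin n → ℝ) : ℝ := ∑ i, u i * v i

/-- The roots of type `B_n`: `±e_i` and `±e_j ± e_k` for `j < k` (all four sign choices). -/
def typeB (n : ℕ) : Set (Fin n → ℝ) :=
  {v | ∃ i, v = stdBasis n i ∨ v = -stdBasis n i} ∪
  {v | ∃ j k, j < k ∧ ∃ ε δ : ℝ, (ε = 1 ∨ ε = -1) ∧ (δ = 1 ∨ δ = -1) ∧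
    v = ε • stdBasis n j + δ • stdBasis n k}

/-- The lattice `ℤ^n ⊆ ℝ^n`. -/
def intLattice (n : ℕ) : Set (Fin n → ℝ) := {u | ∀ i, ∃ m : ℤ, u i = m}

lemma innerProd_basis {n : ℕ} (u : Fin n → ℝ) (i : Fin n) :
    innerProd u (stdBasis n i) = u i := by
  simp [innerProd, stdBasis, mul_ite]

lemma innerProd_neg {n : ℕ} (u v : Fin n → ℝ) : innerProd u (-v) = -innerProd u v := by
  simp [innerProd, mul_neg]

lemma innerProd_pair {n : ℕ} (u : Fin n → ℝ) {j k : Fin n} (hjk : j ≠ k) (ε δ : ℝ) :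
    innerProd u (ε • stdBasis n j + δ • stdBasis n k) = ε * u j + δ * u k := by
  simp only [innerProd, Pi.add_apply, Pi.smul_apply, smul_eq_mul, mul_add]
  rw [Finset.sum_add_distrib]
  congr 1
  · simp [stdBasis, mul_ite, mul_comm]
  · simp [stdBasis, mul_ite, mul_comm]

lemma innerProd_sub {n : ℕ} (u w v : Fin n → ℝ) :
    innerProd (u - w) v = innerProd u v - innerProd w v := by
  simp [innerProd, sub_mul, Finset.sum_sub_distrib]

lemma innerProd_div {n : ℕ} (u v : Fin n → ℝ) (a : ℝ) :
    innerProd (fun i => u i / a) v = innerProd u v / a := by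
  simp [innerProd, Finset.sum_div, div_mul_eq_mul_div]

lemma innerProd_sum {n : ℕ} {ι : Type*} (t : Finset ι) (w : ι → ℝ) (z : ι → Fin n → ℝ)
    (v : Fin n → ℝ) :
    innerProd (∑ i ∈ t, w i • z i) v = ∑ i ∈ t, w i * innerProd (z i) v := by
  simp only [innerProd, Finset.sum_apply, Pi.smul_apply, smul_eq_mul, Finset.mul_sum]
  rw [Finset.sum_comm]
  congr 1; ext j
  rw [Finset.sum_mul]
  congr 1; ext i; ring

lemma isLinear_innerProd {n : ℕ} (v : Fin n → ℝ) : IsLinearMap ℝ (fun y => innerProd y v) := by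
  constructor
  · intro a b; simp [innerProd, add_mul, Finset.sum_add_distrib]
  · intro c a; simp [innerProd, Finset.mul_sum, mul_assoc]

lemma intLattice_innerProd {n : ℕ} {u v : Fin n → ℝ} (hu : u ∈ intLattice n)
    (hv : v ∈ typeB n) : ∃ z : ℤ, innerProd u v = z := by
  rcases hv with ⟨i, h | h⟩ | ⟨j, k, hjk, ε, δ, hε, hδ, h⟩
  · obtain ⟨z, hz⟩ := hu i; exact ⟨z, by rw [h, innerProd_basis, hz]⟩
  · obtain ⟨z, hz⟩ := hu i; exact ⟨-z, by rw [h, innerProd_neg, innerProd_basis, hz]; push_cast; ring⟩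
  · obtain ⟨zj, hzj⟩ := hu j; obtain ⟨zk, hzk⟩ := hu k
    have he : ∃ e : ℤ, (e : ℝ) = ε := by
      rcases hε with h|h
      · exact ⟨1, by rw [h]; norm_num⟩
      · exact ⟨-1, by rw [h]; norm_num⟩
    have hd : ∃ d : ℤ, (d : ℝ) = δ := by
      rcases hδ with h|h
      · exact ⟨1, by rw [h]; norm_num⟩
      · exact ⟨-1, by rw [h]; norm_num⟩
    obtain ⟨e, he⟩ := he
    obtain ⟨d, hd⟩ := hd
    exact ⟨e * zj + d * zk, by rw [h, innerProd_pair u hjk.ne, hzj, hzk, ← he, ← hd]; push_cast; ring⟩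

/-- Integer sandwich: if `|Y - s| < 1` with everything integral, then `c ≤ Y ≤ X-(M-1)c`. -/
lemma sandwich (c Y X : ℤ) (M : ℕ) (hM : 2 ≤ M) (s : ℝ) (hc : (c:ℝ) ≤ s)
    (hX : (X:ℝ) = M * s) (hlt : |(Y:ℝ) - s| < 1) :
    (c:ℝ) ≤ Y ∧ (Y:ℝ) ≤ X - ((M:ℝ) - 1) * c := by
  have hM2 : (2:ℝ) ≤ (M:ℝ) := by exact_mod_cast hM
  have habs := abs_lt.mp hlt
  have hsU : s ≤ (X:ℝ) - ((M:ℝ) - 1) * c := by nlinarith [habs.1, habs.2]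
  constructor
  · have h1 : (c:ℝ) < (Y:ℝ) + 1 := by linarith [habs.1]
    have : c < Y + 1 := by exact_mod_cast h1
    have : c ≤ Y := by omega
    exact_mod_cast this
  · have hU : ((X - (M - 1) * c : ℤ) : ℝ) = (X:ℝ) - ((M:ℝ) - 1) * c := by push_cast; ring
    have h1 : (Y:ℝ) < ((X - (M - 1) * c : ℤ) : ℝ) + 1 := by rw [hU]; linarith [habs.2]
    have : Y < X - (M - 1) * c + 1 := by exact_mod_cast h1
    have : Y ≤ X - (M - 1) * c := by omega
    calc (Y:ℝ) ≤ ((X - (M - 1) * c : ℤ) : ℝ) := by exact_mod_cast this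
      _ = (X:ℝ) - ((M:ℝ) - 1) * c := hU

/-- The tie-pair case: `s` is an integer, `|Y - s| ≤ 1`, and if the constraint is tight
then `Y = s`. -/
lemma tiepair (c : ℤ) (M : ℕ) (hM : 2 ≤ M) (s Y X : ℝ) (sZ : ℤ) (hsZ : s = sZ)
    (hc : (c:ℝ) ≤ s) (hX : X = M * s) (h1 : |Y - s| ≤ 1)
    (htight : s = (c:ℝ) → Y = s) :
    (c:ℝ) ≤ Y ∧ Y ≤ X - ((M:ℝ) - 1) * c := by
  have hM2 : (2:ℝ) ≤ (M:ℝ) := by exact_mod_cast hM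
  have habs := abs_le.mp h1
  by_cases ht : s = (c:ℝ)
  · have hY := htight ht
    constructor
    · rw [hY, ht]
    · rw [hY, hX, ht]; nlinarith
  · have hlt : (c:ℝ) < s := lt_of_le_of_ne hc (Ne.symm ht)
    have : c < sZ := by exact_mod_cast hsZ ▸ hlt
    have hle : (c:ℝ) + 1 ≤ s := by
      have : c + 1 ≤ sZ := by omega
      calc (c:ℝ) + 1 = ((c+1 : ℤ):ℝ) := by push_cast; ring
        _ ≤ (sZ:ℝ) := by exact_mod_cast this
        _ = s := hsZ.symm
    constructor
    · linarith [habs.1]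
    · rw [hX]; nlinarith [habs.2]

/-- Rounding a real `t` to an integer `Y` at distance `≤ 1/2`, breaking the tie
`fract t = 1/2` according to the position of an integer reference point `w`. -/
lemma roundExists (t w : ℝ) (hw : ∃ z : ℤ, w = z) :
    ∃ Y : ℤ, |(Y:ℝ) - t| ≤ 1/2 ∧ (Int.fract t ≠ 1/2 → |(Y:ℝ) - t| < 1/2) ∧
      (Int.fract t = 1/2 → (((Y:ℝ) - t = 1/2 ∧ t < w) ∨ ((Y:ℝ) - t = -(1/2) ∧ w < t))) := by
  have hfloor : t - (⌊t⌋ : ℝ) = Int.fract t := Int.self_sub_floor t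
  have hr0 : 0 ≤ Int.fract t := Int.fract_nonneg t
  have hr1 : Int.fract t < 1 := Int.fract_lt_one t
  rcases lt_trichotomy (Int.fract t) (1/2) with h | h | h
  · refine ⟨⌊t⌋, ?_, ?_, ?_⟩
    · rw [abs_le]; constructor <;> linarith
    · intro _; rw [abs_lt]; constructor <;> linarith
    · intro he; exact absurd he (by linarith)
  · by_cases hlt : t < w
    · refine ⟨⌊t⌋ + 1, ?_, ?_, ?_⟩
      · rw [abs_le]; push_cast; constructor <;> linarith
      · intro hne; exact absurd h hne
      · intro _; left; push_cast; constructor <;> linarith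
    · have hne : w ≠ t := by
        intro he
        obtain ⟨z, hz⟩ := hw
        have : Int.fract t = 0 := by rw [← he, hz, Int.fract_intCast]
        rw [this] at h; norm_num at h
      have hwt : w < t := lt_of_le_of_ne (le_of_not_gt hlt) hne
      refine ⟨⌊t⌋, ?_, ?_, ?_⟩
      · rw [abs_le]; constructor <;> linarith
      · intro hne'; exact absurd h hne'
      · intro _; right; constructor <;> [linarith; exact hwt]
  · refine ⟨⌊t⌋ + 1, ?_, ?_, ?_⟩
    · rw [abs_le]; push_cast; constructor <;> linarith
    · intro _; rw [abs_lt]; push_cast; constructor <;> linarith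
    · intro he; exact absurd he (by linarith)

set_option maxHeartbeats 2000000 in
/-- Core step: from a lattice point `x` satisfying the dilated constraints `M·c`,
split off a lattice point `y` of `P` so that `x - y` satisfies the `(M-1)·c` constraints. -/
lemma step {n : ℕ} (S : Finset (Fin n → ℝ)) (hS : ↑S ⊆ typeB n) (c' : (Fin n → ℝ) → ℤ)
    (V : Set (Fin n → ℝ)) (hVlat : V ⊆ intLattice n)
    (hP : {y : Fin n → ℝ | ∀ v ∈ S, (c' v : ℝ) ≤ innerProd y v} = convexHull ℝ V)
    (M : ℕ) (hM : 2 ≤ M) (x : Fin n → ℝ) (hx : x ∈ intLattice n)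
    (hxc : ∀ v ∈ S, (M:ℝ) * c' v ≤ innerProd x v) :
    ∃ y, y ∈ intLattice n ∧ (∀ v ∈ S, (c' v:ℝ) ≤ innerProd y v) ∧
      (∀ v ∈ S, ((M:ℝ) - 1) * c' v ≤ innerProd (x - y) v) := by
  have hM0 : (0:ℝ) < M := by
    have : (2:ℝ) ≤ M := by exact_mod_cast hM
    linarith
  set t : Fin n → ℝ := fun i => x i / M with htdef
  have hxt : ∀ i, x i = M * t i := by
    intro i; simp only [htdef]; field_simp
  have htP : ∀ v ∈ S, (c' v:ℝ) ≤ innerProd t v := by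
    intro v hv
    have h1 := hxc v hv
    have h2 : innerProd t v = innerProd x v / M := innerProd_div x v M
    rw [h2, le_div_iff₀ hM0]
    linarith
  have htX : ∀ v, innerProd x v = M * innerProd t v := by
    intro v
    rw [innerProd_div x v M]
    field_simp
  -- express t as a convex combination of points of V
  have htV : t ∈ convexHull ℝ V := by rw [← hP]; exact htP
  rw [_root_.convexHull_eq] at htV
  obtain ⟨ι, tt, wgt, z, hw0, hw1, hzV, hcm⟩ := htV
  have hpos : ∃ i ∈ tt, 0 < wgt i := by
    by_contra hcon
    push_neg at hcon
    have : ∑ i ∈ tt, wgt i ≤ 0 := Finset.sum_nonpos hcon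
    rw [hw1] at this; linarith
  obtain ⟨i₀, hi₀t, hi₀⟩ := hpos
  set w : Fin n → ℝ := z i₀ with hwdef
  have hwV : w ∈ V := hzV i₀ hi₀t
  have hwlat : w ∈ intLattice n := hVlat hwV
  -- every constraint tight at t is tight at the lattice point w
  have htight : ∀ v ∈ S, innerProd t v = c' v → innerProd w v = c' v := by
    intro v hv he
    have hexp : innerProd t v = ∑ i ∈ tt, wgt i * innerProd (z i) v := by
      rw [← hcm, Finset.centerMass_eq_of_sum_1 _ _ hw1, innerProd_sum]
    have hzc : ∀ i ∈ tt, (c' v:ℝ) ≤ innerProd (z i) v := by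
      intro i hi
      have hziP : z i ∈ {y : Fin n → ℝ | ∀ v ∈ S, (c' v:ℝ) ≤ innerProd y v} := by
        rw [hP]; exact subset_convexHull ℝ V (hzV i hi)
      exact hziP v hv
    have hsum0 : ∑ i ∈ tt, wgt i * (innerProd (z i) v - c' v) = 0 := by
      have hsplit : ∑ i ∈ tt, wgt i * (innerProd (z i) v - c' v)
          = (∑ i ∈ tt, wgt i * innerProd (z i) v) - (∑ i ∈ tt, wgt i) * c' v := by
        rw [Finset.sum_mul, ← Finset.sum_sub_distrib]
        congr 1; ext i; ring
      rw [hsplit, ← hexp, he, hw1]; ring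
    have hterm := (Finset.sum_eq_zero_iff_of_nonneg
      (fun i hi => mul_nonneg (hw0 i hi) (by linarith [hzc i hi]))).mp hsum0 i₀ hi₀t
    have hz0 : innerProd (z i₀) v - c' v = 0 := by
      rcases mul_eq_zero.mp hterm with h | h
      · exact absurd h (ne_of_gt hi₀)
      · exact h
    have hwz : innerProd w v = innerProd (z i₀) v := by rw [hwdef]
    linarith
  -- round each coordinate of t, breaking ties toward w
  choose Y hY1 hY2 hY3 using fun i => roundExists (t i) (w i) (hwlat i)
  set y : Fin n → ℝ := fun i => (Y i : ℝ) with hydef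
  have hylat : y ∈ intLattice n := fun i => ⟨Y i, rfl⟩
  have hyc : ∀ i, y i = ((Y i : ℤ) : ℝ) := fun i => rfl
  have key : ∀ v ∈ S, (c' v:ℝ) ≤ innerProd y v ∧
      innerProd y v ≤ innerProd x v - ((M:ℝ) - 1) * c' v := by
    intro v hv
    have hvB : v ∈ typeB n := hS hv
    have hc := htP v hv
    rcases hvB with ⟨i, h | h⟩ | ⟨j, k, hjk, ε, δ, hε, hδ, h⟩
    · -- v = e_i
      subst h
      obtain ⟨a, ha⟩ := hx i
      rw [innerProd_basis] at hc
      rw [innerProd_basis, innerProd_basis]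
      have hres := sandwich (c' (stdBasis n i)) (Y i) a M hM (t i) hc
        (by rw [← ha, hxt i])
        (by calc |(Y i:ℝ) - t i| ≤ 1/2 := hY1 i
              _ < 1 := by norm_num)
      rw [hyc i, ha]
      exact hres
    · -- v = -e_i
      subst h
      obtain ⟨a, ha⟩ := hx i
      rw [innerProd_neg, innerProd_basis] at hc
      rw [innerProd_neg, innerProd_basis, innerProd_neg, innerProd_basis]
      have habs : |((-Y i : ℤ):ℝ) - (-(t i))| < 1 := by
        have hrw : ((-Y i : ℤ):ℝ) - (-(t i)) = -(((Y i:ℤ):ℝ) - t i) := by push_cast; ring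
        rw [hrw, abs_neg]
        calc |((Y i:ℤ):ℝ) - t i| ≤ 1/2 := hY1 i
          _ < 1 := by norm_num
      have hres := sandwich (c' (-stdBasis n i)) (-Y i) (-a) M hM (-(t i)) hc
        (by push_cast; rw [← ha, hxt i]; ring) habs
      have hr1 := hres.1
      have hr2 := hres.2
      push_cast at hr1 hr2
      rw [hyc i, ha]
      constructor
      · linarith
      · push_cast; linarith
    · -- v = ε e_j + δ e_k
      subst h
      obtain ⟨aj, haj⟩ := hx j
      obtain ⟨ak, hak⟩ := hx k
      have hpt := innerProd_pair t hjk.ne ε δ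
      have hpy := innerProd_pair y hjk.ne ε δ
      have hpx := innerProd_pair x hjk.ne ε δ
      have hpw := innerProd_pair w hjk.ne ε δ
      rw [hpt] at hc
      rw [hpy, hpx]
      obtain ⟨C, hCeq⟩ : ∃ C : ℤ, C = c' (ε • stdBasis n j + δ • stdBasis n k) := ⟨_, rfl⟩
      rw [← hCeq] at hc ⊢
      by_cases htie : Int.fract (t j) = 1/2 ∧ Int.fract (t k) = 1/2
      · -- both coordinates are half-integers
        obtain ⟨hj2, hk2⟩ := htie
        have hftj : t j - (⌊t j⌋:ℝ) = 1/2 := by rw [Int.self_sub_floor, hj2]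
        have hftk : t k - (⌊t k⌋:ℝ) = 1/2 := by rw [Int.self_sub_floor, hk2]
        have hdj := abs_le.mp (hY1 j)
        have hdk := abs_le.mp (hY1 k)
        have hwj := hY3 j hj2
        have hwk := hY3 k hk2
        have htt := htight _ hv
        rw [hpt, hpw, ← hCeq] at htt
        have hyj := hyc j
        have hyk := hyc k
        rcases hε with hε1 | hε1 <;> subst hε1 <;> rcases hδ with hδ1 | hδ1 <;> subst hδ1
        · have hsZ : (1:ℝ) * t j + 1 * t k = ((⌊t j⌋ + ⌊t k⌋ + 1 : ℤ):ℝ) := by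
            push_cast; linarith
          have hXX : (1:ℝ) * x j + 1 * x k = (M:ℝ) * ((1:ℝ) * t j + 1 * t k) := by
            rw [hxt j, hxt k]; ring
          have h1 : |((1:ℝ) * y j + 1 * y k) - ((1:ℝ) * t j + 1 * t k)| ≤ 1 := by
            rw [abs_le]; rw [hyj, hyk]; constructor <;> · push_cast; linarith
          have ht2 : (1:ℝ) * t j + 1 * t k = (C:ℝ) →
              (1:ℝ) * y j + 1 * y k = (1:ℝ) * t j + 1 * t k := by
            intro hts
            have hww := htt hts
            rw [hyj, hyk]
            rcases hwj with ⟨e1, e2⟩ | ⟨e1, e2⟩ <;> rcases hwk with ⟨f1, f2⟩ | ⟨f1, f2⟩ <;>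
              linarith
          exact tiepair C M hM _ _ _ (⌊t j⌋ + ⌊t k⌋ + 1) hsZ hc hXX h1 ht2
        · have hsZ : (1:ℝ) * t j + (-1) * t k = ((⌊t j⌋ - ⌊t k⌋ : ℤ):ℝ) := by
            push_cast; linarith
          have hXX : (1:ℝ) * x j + (-1) * x k = (M:ℝ) * ((1:ℝ) * t j + (-1) * t k) := by
            rw [hxt j, hxt k]; ring
          have h1 : |((1:ℝ) * y j + (-1) * y k) - ((1:ℝ) * t j + (-1) * t k)| ≤ 1 := by
            rw [abs_le]; rw [hyj, hyk]; constructor <;> · push_cast; linarith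
          have ht2 : (1:ℝ) * t j + (-1) * t k = (C:ℝ) →
              (1:ℝ) * y j + (-1) * y k = (1:ℝ) * t j + (-1) * t k := by
            intro hts
            have hww := htt hts
            rw [hyj, hyk]
            rcases hwj with ⟨e1, e2⟩ | ⟨e1, e2⟩ <;> rcases hwk with ⟨f1, f2⟩ | ⟨f1, f2⟩ <;>
              linarith
          exact tiepair C M hM _ _ _ (⌊t j⌋ - ⌊t k⌋) hsZ hc hXX h1 ht2
        · have hsZ : (-1:ℝ) * t j + 1 * t k = ((-⌊t j⌋ + ⌊t k⌋ : ℤ):ℝ) := by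
            push_cast; linarith
          have hXX : (-1:ℝ) * x j + 1 * x k = (M:ℝ) * ((-1:ℝ) * t j + 1 * t k) := by
            rw [hxt j, hxt k]; ring
          have h1 : |((-1:ℝ) * y j + 1 * y k) - ((-1:ℝ) * t j + 1 * t k)| ≤ 1 := by
            rw [abs_le]; rw [hyj, hyk]; constructor <;> · push_cast; linarith
          have ht2 : (-1:ℝ) * t j + 1 * t k = (C:ℝ) →
              (-1:ℝ) * y j + 1 * y k = (-1:ℝ) * t j + 1 * t k := by
            intro hts
            have hww := htt hts
            rw [hyj, hyk]
            rcases hwj with ⟨e1, e2⟩ | ⟨e1, e2⟩ <;> rcases hwk with ⟨f1, f2⟩ | ⟨f1, f2⟩ <;>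
              linarith
          exact tiepair C M hM _ _ _ (-⌊t j⌋ + ⌊t k⌋) hsZ hc hXX h1 ht2
        · have hsZ : (-1:ℝ) * t j + (-1) * t k = ((-⌊t j⌋ - ⌊t k⌋ - 1 : ℤ):ℝ) := by
            push_cast; linarith
          have hXX : (-1:ℝ) * x j + (-1) * x k = (M:ℝ) * ((-1:ℝ) * t j + (-1) * t k) := by
            rw [hxt j, hxt k]; ring
          have h1 : |((-1:ℝ) * y j + (-1) * y k) - ((-1:ℝ) * t j + (-1) * t k)| ≤ 1 := by
            rw [abs_le]; rw [hyj, hyk]; constructor <;> · push_cast; linarith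
          have ht2 : (-1:ℝ) * t j + (-1) * t k = (C:ℝ) →
              (-1:ℝ) * y j + (-1) * y k = (-1:ℝ) * t j + (-1) * t k := by
            intro hts
            have hww := htt hts
            rw [hyj, hyk]
            rcases hwj with ⟨e1, e2⟩ | ⟨e1, e2⟩ <;> rcases hwk with ⟨f1, f2⟩ | ⟨f1, f2⟩ <;>
              linarith
          exact tiepair C M hM _ _ _ (-⌊t j⌋ - ⌊t k⌋ - 1) hsZ hc hXX h1 ht2
      · -- not both half-integers: strict rounding bound
        have hone : |((Y j:ℤ):ℝ) - t j| + |((Y k:ℤ):ℝ) - t k| < 1 := by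
          by_cases hj : Int.fract (t j) = 1/2
          · have hk : Int.fract (t k) ≠ 1/2 := fun hk => htie ⟨hj, hk⟩
            have h1 := hY2 k hk
            have h2 := hY1 j
            linarith
          · have h1 := hY2 j hj
            have h2 := hY1 k
            linarith
        have hεabs : |ε| = 1 := by rcases hε with h1 | h1 <;> rw [h1] <;> simp
        have hδabs : |δ| = 1 := by rcases hδ with h1 | h1 <;> rw [h1] <;> simp
        have hee : ∃ e : ℤ, (e:ℝ) = ε := by
          rcases hε with h1 | h1
          · exact ⟨1, by rw [h1]; norm_num⟩
          · exact ⟨-1, by rw [h1]; norm_num⟩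
        have hdd : ∃ d : ℤ, (d:ℝ) = δ := by
          rcases hδ with h1 | h1
          · exact ⟨1, by rw [h1]; norm_num⟩
          · exact ⟨-1, by rw [h1]; norm_num⟩
        obtain ⟨e, he⟩ := hee
        obtain ⟨d, hd⟩ := hdd
        have hsum : |((e * Y j + d * Y k : ℤ):ℝ) - (ε * t j + δ * t k)| < 1 := by
          have h1 : ((e * Y j + d * Y k:ℤ):ℝ) - (ε * t j + δ * t k)
              = ε * (((Y j:ℤ):ℝ) - t j) + δ * (((Y k:ℤ):ℝ) - t k) := by
            push_cast
            rw [he, hd]; ring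
          rw [h1]
          calc |ε * (((Y j:ℤ):ℝ) - t j) + δ * (((Y k:ℤ):ℝ) - t k)|
              ≤ |ε * (((Y j:ℤ):ℝ) - t j)| + |δ * (((Y k:ℤ):ℝ) - t k)| := abs_add_le _ _
            _ = |((Y j:ℤ):ℝ) - t j| + |((Y k:ℤ):ℝ) - t k| := by
                rw [abs_mul, abs_mul, hεabs, hδabs, one_mul, one_mul]
            _ < 1 := hone
        have hXv : ((e * aj + d * ak : ℤ):ℝ) = M * (ε * t j + δ * t k) := by
          push_cast
          rw [he, hd, ← haj, ← hak, hxt j, hxt k]; ring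
        have hres := sandwich C
          (e * Y j + d * Y k) (e * aj + d * ak) M hM (ε * t j + δ * t k) hc hXv hsum
        have hr1 := hres.1
        have hr2 := hres.2
        have hYv : ((e * Y j + d * Y k : ℤ):ℝ) = ε * y j + δ * y k := by
          rw [hyc j, hyc k]; push_cast; rw [he, hd]
        have hXc : ((e * aj + d * ak : ℤ):ℝ) = ε * x j + δ * x k := by
          push_cast; rw [he, hd, ← haj, ← hak]
        rw [hYv] at hr1 hr2
        rw [hXc] at hr2
        exact ⟨hr1, hr2⟩
  refine ⟨y, hylat, fun v hv => (key v hv).1, fun v hv => ?_⟩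
  rw [innerProd_sub]
  linarith [(key v hv).2]

lemma innerProd_smul_left {n : ℕ} (a : ℝ) (u v : Fin n → ℝ) :
    innerProd (a • u) v = a * innerProd u v := by
  simp [innerProd, Finset.mul_sum, mul_assoc]

lemma main_aux {n : ℕ} (S : Finset (Fin n → ℝ)) (hS : ↑S ⊆ typeB n)
    (c' : (Fin n → ℝ) → ℤ) (V : Set (Fin n → ℝ)) (hVlat : V ⊆ intLattice n)
    (hP : {y : Fin n → ℝ | ∀ v ∈ S, (c' v : ℝ) ≤ innerProd y v} = convexHull ℝ V) :
    ∀ M : ℕ, 1 ≤ M → ∀ x, x ∈ intLattice n →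
      (∀ v ∈ S, (M:ℝ) * c' v ≤ innerProd x v) →
      ∃ f : Fin M → (Fin n → ℝ),
        (∀ j, f j ∈ intLattice n ∧ ∀ v ∈ S, (c' v:ℝ) ≤ innerProd (f j) v) ∧ x = ∑ j, f j := by
  intro M hM
  induction M, hM using Nat.le_induction with
  | base =>
    intro x hx hxc
    refine ⟨fun _ => x, fun j => ⟨hx, fun v hv => ?_⟩, by simp⟩
    have := hxc v hv
    push_cast at this
    linarith
  | succ M hM1 ih =>
    intro x hx hxc
    obtain ⟨y, hylat, hyP, hrest⟩ := step S hS c' V hVlat hP (M+1) (by omega) x hx hxc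
    have hxylat : x - y ∈ intLattice n := by
      intro i
      obtain ⟨a, ha⟩ := hx i
      obtain ⟨b, hb⟩ := hylat i
      exact ⟨a - b, by simp [Pi.sub_apply, ha, hb]⟩
    have hxyc : ∀ v ∈ S, (M:ℝ) * c' v ≤ innerProd (x - y) v := by
      intro v hv
      have := hrest v hv
      push_cast at this ⊢
      linarith
    obtain ⟨f, hf, hsum⟩ := ih (x - y) hxylat hxyc
    refine ⟨Fin.cons y f, ?_, ?_⟩
    · intro j
      refine Fin.cases ?_ ?_ j
      · exact ⟨hylat, hyP⟩
      · intro jj; simpa using hf jj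
    · rw [Fin.sum_cons, ← hsum]
      abel

/-- Every lattice polytope cut out by the root system `B_n` is normal: every lattice
point of `m·P` is a sum of `m` lattice points of `P`. -/
theorem typeB_polytope_normal (n : ℕ) (hn : 1 ≤ n) (P : Set (Fin n → ℝ))
    (hpoly : ∃ V : Set (Fin n → ℝ), V.Finite ∧ V.Nonempty ∧ V ⊆ intLattice n ∧
      P = convexHull ℝ V)
    (hcut : ∃ S : Finset (Fin n → ℝ), ↑S ⊆ typeB n ∧ ∃ c : (Fin n → ℝ) → ℝ,
      P = {x | ∀ v ∈ S, c v ≤ innerProd x v})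
    (m : ℕ) (hm : 0 < m) (x : Fin n → ℝ) (hx : x ∈ intLattice n) (hxm : x ∈ (m : ℝ) • P) :
    ∃ f : Fin m → (Fin n → ℝ), (∀ j, f j ∈ intLattice n ∧ f j ∈ P) ∧ x = ∑ j, f j := by
  obtain ⟨V, hVfin, hVne, hVlat, hPV⟩ := hpoly
  obtain ⟨S, hS, c, hPc⟩ := hcut
  set c' : (Fin n → ℝ) → ℤ := fun v => ⌈c v⌉ with hc'def
  have hP2 : {y : Fin n → ℝ | ∀ v ∈ S, (c' v : ℝ) ≤ innerProd y v} = convexHull ℝ V := by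
    apply Set.Subset.antisymm
    · intro yy hyy
      rw [← hPV, hPc]
      exact fun v hv => le_trans (Int.le_ceil (c v)) (hyy v hv)
    · intro yy hyy v hv
      have hsub : V ⊆ {y : Fin n → ℝ | (c' v : ℝ) ≤ innerProd y v} := by
        intro u hu
        have huP : u ∈ P := hPV ▸ subset_convexHull ℝ V hu
        have h1 : c v ≤ innerProd u v := (hPc ▸ huP) v hv
        obtain ⟨zz, hzz⟩ := intLattice_innerProd (hVlat hu) (hS hv)
        show (c' v : ℝ) ≤ innerProd u v
        rw [hzz] at h1 ⊢
        exact_mod_cast Int.ceil_le.mpr h1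
      exact convexHull_min hsub (convex_halfSpace_ge (isLinear_innerProd v) _) hyy
  obtain ⟨p, hp, hpx⟩ := Set.mem_smul_set.mp hxm
  have hpP : ∀ v ∈ S, (c' v : ℝ) ≤ innerProd p v := by
    have : p ∈ {y : Fin n → ℝ | ∀ v ∈ S, (c' v : ℝ) ≤ innerProd y v} := by
      rw [hP2, ← hPV]; exact hp
    exact this
  have hxc : ∀ v ∈ S, (m:ℝ) * c' v ≤ innerProd x v := by
    intro v hv
    rw [← hpx, innerProd_smul_left]
    have hm0 : (0:ℝ) ≤ m := by positivity
    exact mul_le_mul_of_nonneg_left (hpP v hv) hm0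
  obtain ⟨f, hf, hsum⟩ := main_aux S hS c' V hVlat hP2 m hm x hx hxc
  refine ⟨f, fun j => ⟨(hf j).1, ?_⟩, hsum⟩
  rw [hPV, ← hP2]
  exact (hf j).2
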